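/- Let $p^*$ minimize $p(-1)$ among all polynomials of degree at most $n \ge 1$ satisfying the equioscillation property of modulus 1 on $[0,a]$, with optimal nodes $0 \le t_0^* < \cdots < t_n^* \le a$. Then $t_0^* = 0$ and $t_n^* = a$. -/

import Mathlib

open Polynomial

/-- A polynomial equioscillates with modulus 1 on `[0,a]` with `n+1` nodes. -/
def Equioscillates (n : ℕ) (a : ℝ) (p : ℝ[X]) : Prop :=
  ∃ t : Fin (n + 1) → ℝ, StrictMono t ∧ 0 ≤ t 0 ∧ t (Fin.last n) ≤ a ∧
    ∀ i : Fin (n + 1), p.eval (t i) = (-1 : ℝ) ^ (i : ℕ)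

private lemma root_between {g : ℝ → ℝ} (hg : Continuous g) {x y : ℝ} (hxy : x < y)
    (h : g x < 0 ∧ 0 < g y ∨ g y < 0 ∧ 0 < g x) : ∃ z ∈ Set.Ioo x y, g z = 0 := by
  rcases h with ⟨h1, h2⟩ | ⟨h1, h2⟩
  · obtain ⟨z, hz, hz0⟩ := intermediate_value_Ioo hxy.le hg.continuousOn
      (Set.mem_Ioo.2 ⟨h1, h2⟩)
    exact ⟨z, hz, hz0⟩
  · obtain ⟨z, hz, hz0⟩ := intermediate_value_Ioo' hxy.le hg.continuousOn
      (Set.mem_Ioo.2 ⟨h1, h2⟩)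
    exact ⟨z, hz, hz0⟩

/-- the optimal equioscillating polynomial has `t 0 = 0` and `t n = a`. -/
theorem stmt_14 (n : ℕ) (hn : 1 ≤ n) (a : ℝ) (p : ℝ[X]) (hd : p.natDegree ≤ n)
    (t : Fin (n + 1) → ℝ) (ht0 : 0 ≤ t 0) (htmono : StrictMono t) (hta : t (Fin.last n) ≤ a)
    (hp : ∀ i : Fin (n + 1), p.eval (t i) = (-1 : ℝ) ^ (i : ℕ))
    (hmin : ∀ q : ℝ[X], q.natDegree ≤ n → Equioscillates n a q →
      p.eval (-1) ≤ q.eval (-1)) :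
    t 0 = 0 ∧ t (Fin.last n) = a := by
  by_contra hcon
  set T0 := t 0 with hT0
  set Tn := t (Fin.last n) with hTn
  have h0last : (0 : Fin (n + 1)) < Fin.last n := by
    rw [Fin.lt_iff_val_lt_val]
    simpa using (show 0 < n by omega)
  have hT0n : T0 < Tn := htmono h0last
  have ha : 0 < a := lt_of_le_of_lt ht0 (lt_of_lt_of_le hT0n hta)
  set u' : ℝ := T0 - (Tn - T0) / a with hu'def
  -- `-1 < u'` since not both `T0 = 0` and `Tn = a`
  have hu' : (-1 : ℝ) < u' := by
    have hcase : 0 < T0 ∨ Tn < a := by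
      rcases eq_or_lt_of_le ht0 with h | h
      · rcases eq_or_lt_of_le hta with h2 | h2
        · exact absurd ⟨h.symm, h2⟩ hcon
        · exact Or.inr h2
      · exact Or.inl h
    rw [hu'def, neg_lt, neg_sub, sub_lt_iff_lt_add, div_lt_iff₀ ha]
    rcases hcase with h | h
    · nlinarith
    · nlinarith
  -- key: by minimality, p(-1) ≤ p(u) for all u ≤ u'
  have key : ∀ u ≤ u', p.eval (-1) ≤ p.eval u := by
    intro u hu
    set α := T0 - u with hα
    have hαpos : 0 < α := by
      have : 0 < (Tn - T0) / a := div_pos (by linarith) ha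
      rw [hα]; rw [hu'def] at hu; linarith
    have hαa : Tn - T0 ≤ α * a := by
      have h1 : (Tn - T0) / a ≤ α := by rw [hu'def] at hu; rw [hα]; linarith
      have := mul_le_mul_of_nonneg_right h1 ha.le
      rwa [div_mul_cancel₀ _ ha.ne'] at this
    set q := p.comp (C α * X + C T0) with hq
    have hqeval : ∀ x : ℝ, q.eval x = p.eval (α * x + T0) := by
      intro x; simp [hq, eval_comp]
    have hqdeg : q.natDegree ≤ n := by
      rw [hq, natDegree_comp, natDegree_linear hαpos.ne', mul_one]
      exact hd
    have hequi : Equioscillates n a q := by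
      refine ⟨fun i => (t i - T0) / α, ?_, ?_, ?_, ?_⟩
      · intro i j hij
        exact (div_lt_div_iff_of_pos_right hαpos).2 (sub_lt_sub_right (htmono hij) T0)
      · simp [hT0]
      · rw [div_le_iff₀ hαpos]; linarith [hαa]
      · intro i
        have hx : α * ((t i - T0) / α) + T0 = t i := by
          field_simp
          ring
        rw [hqeval, hx]
        exact hp i
    have := hmin q hqdeg hequi
    rwa [hqeval, show α * (-1) + T0 = u by rw [hα]; ring] at this
  -- hence `-1` is a local minimum of `p`, so `p'(-1) = 0`
  have hg1 : p.derivative.eval (-1) = 0 := by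
    have hlm : IsLocalMin (fun x => p.eval x) (-1) := by
      refine IsMinOn.isLocalMin ?_ (Iic_mem_nhds hu')
      intro x hx
      exact key x hx
    have := hlm.deriv_eq_zero
    rwa [Polynomial.deriv] at this
  -- natural-number indexed nodes
  set τ : ℕ → ℝ := fun i => t ⟨min i n, by omega⟩ with hτdef
  have hτeval : ∀ i, i ≤ n → p.eval (τ i) = (-1 : ℝ) ^ i := by
    intro i hi
    have := hp ⟨i, by omega⟩
    simp only [hτdef, min_eq_left hi]
    simpa using this
  have hτm : ∀ i j, i < j → j ≤ n → τ i < τ j := by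
    intro i j hij hj
    apply htmono
    rw [Fin.mk_lt_mk]
    omega
  have hτ0 : τ 0 = T0 := by
    simp only [hτdef, hT0]
    congr 1
  -- mean value theorem points with alternating derivative signs
  have hs' : ∀ i : ℕ, ∃ x, i < n →
      x ∈ Set.Ioo (τ i) (τ (i + 1)) ∧
        p.derivative.eval x = -2 * (-1 : ℝ) ^ i / (τ (i + 1) - τ i) := by
    intro i
    by_cases hi : i < n
    · obtain ⟨c, hc, hc'⟩ := exists_deriv_eq_slope (fun x => p.eval x)
        (hτm i (i + 1) (by omega) (by omega)) (p.continuous.continuousOn)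
        (fun x _ => p.differentiableAt.differentiableWithinAt)
      refine ⟨c, fun _ => ⟨hc, ?_⟩⟩
      rw [Polynomial.deriv] at hc'
      rw [hc', hτeval (i + 1) (by omega), hτeval i (by omega), pow_succ]
      ring
    · exact ⟨0, fun h => absurd h hi⟩
  choose s hs using hs'
  have hsign : ∀ i, i < n →
      (Even i → p.derivative.eval (s i) < 0) ∧ (Odd i → 0 < p.derivative.eval (s i)) := by
    intro i hi
    obtain ⟨hio, hev⟩ := hs i hi
    have hΔ : 0 < τ (i + 1) - τ i := by linarith [hτm i (i + 1) (by omega) (by omega)]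
    constructor
    · intro hpar
      rw [hev, hpar.neg_one_pow]
      apply div_neg_of_neg_of_pos _ hΔ
      norm_num
    · intro hpar
      rw [hev, hpar.neg_one_pow]
      apply div_pos _ hΔ
      norm_num
  have hsm : ∀ i j, i < j → j < n → s i < s j := by
    intro i j hij hj
    have h1 : s i < τ (i + 1) := (hs i (by omega)).1.2
    have h2 : τ j < s j := (hs j hj).1.1
    have h3 : τ (i + 1) ≤ τ j := by
      rcases eq_or_lt_of_le (show i + 1 ≤ j by omega) with h | h
      · rw [h]
      · exact (hτm _ _ h (by omega)).le
    linarith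
  -- roots of p' between consecutive sign-change points
  have hr' : ∀ i : ℕ, ∃ x, i + 1 < n →
      x ∈ Set.Ioo (s i) (s (i + 1)) ∧ p.derivative.eval x = 0 := by
    intro i
    by_cases hi : i + 1 < n
    · have hx : s i < s (i + 1) := hsm i (i + 1) (by omega) hi
      have hroot : ∃ z ∈ Set.Ioo (s i) (s (i + 1)), p.derivative.eval z = 0 := by
        apply root_between p.derivative.continuous hx
        rcases Nat.even_or_odd i with he | ho
        · exact Or.inl ⟨(hsign i (by omega)).1 he, (hsign (i + 1) hi).2 he.add_one⟩
        · exact Or.inr ⟨(hsign (i + 1) hi).1 ho.add_one, (hsign i (by omega)).2 ho⟩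
      obtain ⟨z, hz, hz0⟩ := hroot
      exact ⟨z, fun _ => ⟨hz, hz0⟩⟩
    · exact ⟨0, fun h => absurd h hi⟩
  choose r hr using hr'
  -- the roots are strictly increasing and all positive
  have hrm : ∀ i j, i < j → j + 1 < n → r i < r j := by
    intro i j hij hj
    have h1 : r i < s (i + 1) := (hr i (by omega)).1.2
    have h2 : s j < r j := (hr j hj).1.1
    have h3 : s (i + 1) ≤ s j := by
      rcases eq_or_lt_of_le (show i + 1 ≤ j by omega) with h | h
      · rw [h]
      · exact (hsm _ _ h (by omega)).le
    linarith
  have hrpos : ∀ i, i + 1 < n → 0 ≤ r i := by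
    intro i hi
    have h1 : s i < r i := (hr i hi).1.1
    have h2 : τ i < s i := (hs i (by omega)).1.1
    have h3 : τ 0 ≤ τ i := by
      rcases Nat.eq_zero_or_pos i with h | h
      · rw [h]
      · exact (hτm 0 i h (by omega)).le
    rw [hτ0] at h3
    linarith
  -- assemble a set of n distinct roots of p'
  have hpne : p.derivative ≠ 0 := by
    intro h
    have := (hsign 0 (by omega)).1 ⟨0, rfl⟩
    rw [h] at this
    simp at this
  set F : Finset ℝ := insert (-1) ((Finset.range (n - 1)).image r) with hF
  have hFcard : F.card = n := by
    rw [hF, Finset.card_insert_of_notMem, Finset.card_image_of_injOn, Finset.card_range]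
    · omega
    · intro i hi j hj hij
      simp only [Finset.mem_coe, Finset.mem_range] at hi hj
      rcases lt_trichotomy i j with h | h | h
      · exact absurd hij (hrm i j h (by omega)).ne
      · exact h
      · exact absurd hij.symm (hrm j i h (by omega)).ne
    · intro hmem
      obtain ⟨i, hi, hri⟩ := Finset.mem_image.1 hmem
      rw [Finset.mem_range] at hi
      have := hrpos i (by omega)
      linarith [hri ▸ this]
  have hsub : F ⊆ p.derivative.roots.toFinset := by
    intro x hx
    rw [Multiset.mem_toFinset, mem_roots hpne]
    rw [hF, Finset.mem_insert] at hx
    rcases hx with h | h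
    · rw [h]; exact hg1
    · obtain ⟨i, hi, hri⟩ := Finset.mem_image.1 h
      rw [Finset.mem_range] at hi
      rw [← hri]
      exact (hr i (by omega)).2
  have hcount : n ≤ n - 1 := by
    calc n = F.card := hFcard.symm
      _ ≤ p.derivative.roots.toFinset.card := Finset.card_le_card hsub
      _ ≤ Multiset.card p.derivative.roots := Multiset.toFinset_card_le _
      _ ≤ p.derivative.natDegree := p.derivative.card_roots'
      _ ≤ p.natDegree - 1 := natDegree_derivative_le p
      _ ≤ n - 1 := by omega
  omega
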